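/- Let M be a module over the twisted Schrödinger–Virasoro Lie algebra and let v ∈ M satisfy L_1·v = 0, Y_1·v = 0, M_1·v = 0. Then Y_k·(L_2·v) = 0 and M_k·(L_2·v) = 0 for all integers k ≥ 1. -/

import Mathlib

/-- The twisted Schrödinger–Virasoro Lie algebra: a complex Lie algebra with
basis `{L n, Y m, M p : n m p ∈ ℤ}` and the defining bracket relations. -/
structure TSV (𝓛 : Type*) [LieRing 𝓛] [LieAlgebra ℂ 𝓛] where
  L : ℤ → 𝓛
  Y : ℤ → 𝓛
  M : ℤ → 𝓛
  hLL : ∀ n p : ℤ, ⁅L n, L p⁆ = ((p : ℂ) - n) • L (n + p)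
  hLY : ∀ n m : ℤ, ⁅L n, Y m⁆ = ((m : ℂ) - n / 2) • Y (n + m)
  hLM : ∀ n p : ℤ, ⁅L n, M p⁆ = (p : ℂ) • M (n + p)
  hYY : ∀ m m' : ℤ, ⁅Y m, Y m'⁆ = ((m' : ℂ) - m) • M (m + m')
  hYM : ∀ m p : ℤ, ⁅Y m, M p⁆ = 0
  hMM : ∀ n p : ℤ, ⁅M n, M p⁆ = 0
  indep : LinearIndependent ℂ (Sum.elim L (Sum.elim Y M))
  span_top : Submodule.span ℂ (Set.range L ∪ Set.range Y ∪ Set.range M) = ⊤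

/-- If `v` is annihilated by `L 1`, `Y 1` and `M 1`, then `L 2 • v` is
annihilated by `Y k` and `M k` for all `k ≥ 1`. -/
theorem Y_M_annihilate_L2v (𝓛 V : Type*) [LieRing 𝓛] [LieAlgebra ℂ 𝓛]
    [AddCommGroup V] [Module ℂ V] [LieRingModule 𝓛 V] [LieModule ℂ 𝓛 V]
    (S : TSV 𝓛) (v : V) (hL : ⁅S.L 1, v⁆ = 0) (hY : ⁅S.Y 1, v⁆ = 0)
    (hM : ⁅S.M 1, v⁆ = 0) :
    ∀ k : ℤ, 1 ≤ k → ⁅S.Y k, ⁅S.L 2, v⁆⁆ = 0 ∧ ⁅S.M k, ⁅S.L 2, v⁆⁆ = 0 := by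

  have hYv : ∀ k : ℤ, 1 ≤ k → ⁅S.Y k, v⁆ = 0 := by
    intro k
    refine Int.le_induction (motive := fun n _ => ⁅S.Y n, v⁆ = 0) hY ?_ k
    intro k hk ih
    have h1 : ⁅⁅S.L 1, S.Y k⁆, v⁆ = 0 := by
      rw [lie_lie, ih, hL, lie_zero, lie_zero, sub_zero]
    rw [S.hLY, smul_lie, smul_eq_zero] at h1
    rcases h1 with h1 | h1
    · exfalso
      have h3 : ((2 * k : ℤ) : ℂ) = ((1 : ℤ) : ℂ) := by
        push_cast
        linear_combination 2 * h1
      have := Int.cast_injective (α := ℂ) h3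
      omega
    · rw [add_comm] at h1; exact h1
  have hMv : ∀ k : ℤ, 1 ≤ k → ⁅S.M k, v⁆ = 0 := by
    intro k
    refine Int.le_induction (motive := fun n _ => ⁅S.M n, v⁆ = 0) hM ?_ k
    intro k hk ih
    have h1 : ⁅⁅S.L 1, S.M k⁆, v⁆ = 0 := by
      rw [lie_lie, ih, hL, lie_zero, lie_zero, sub_zero]
    rw [S.hLM, smul_lie, smul_eq_zero] at h1
    rcases h1 with h1 | h1
    · exfalso
      have : (k : ℂ) ≠ 0 := by
        exact_mod_cast Int.cast_ne_zero.mpr (by omega : k ≠ 0)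
      exact this h1
    · rw [add_comm] at h1; exact h1
  intro k hk
  constructor
  · rw [leibniz_lie, ← lie_skew (S.Y k) (S.L 2), S.hLY, hYv k hk, lie_zero, add_zero,
      neg_lie, smul_lie, hYv (2 + k) (by omega), smul_zero, neg_zero]
  · rw [leibniz_lie, ← lie_skew (S.M k) (S.L 2), S.hLM, hMv k hk, lie_zero, add_zero,
      neg_lie, smul_lie, hMv (2 + k) (by omega), smul_zero, neg_zero]
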